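/- Suppose 𝒳 = {x₁, …, x_n} is finite, and for each a' ∈ 𝒜 let P_{a'} be the n×n stochastic matrix with entries (P_{a'})_{ij} = Pr(X_{a'} = x_j | X = x_i). Let P = (1/|𝒜|) Σ_{a'∈𝒜} P_{a'}. If d : 𝒳 → [0,1] is a Π-fair policy (equivalently, P_{a'} d = d for every a' ∈ 𝒜, viewing d as the vector (d(x_i))_i), then d is constant on every recurrent class of P. -/

import Mathlib

open MeasureTheory

/-- A Π-fair policy is constant on every recurrent class of the averaged
counterfactual transition matrix. -/
theorem pi_fair_constant_on_recurrent_classes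
    {Ω 𝒳 𝒜 : Type*} [MeasurableSpace Ω]
    [Fintype 𝒳] [DecidableEq 𝒳] [MeasurableSpace 𝒳] [MeasurableSingletonClass 𝒳]
    [Fintype 𝒜] [Nonempty 𝒜]
    (P : Measure Ω) [IsProbabilityMeasure P]
    (X : Ω → 𝒳) (hX : Measurable X) (hXpos : ∀ x : 𝒳, 0 < P {ω | X ω = x})
    -- counterfactual covariates
    (Xc : 𝒜 → Ω → 𝒳) (hXc : ∀ a', Measurable (Xc a'))
    -- `d` is a Π-fair policy (with `W = X`); equivalently `Pa a' *ᵥ d = d` for all `a'`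
    (d : 𝒳 → ℝ) (hd01 : ∀ x, d x ∈ Set.Icc (0 : ℝ) 1)
    (hfair : ∀ a' : 𝒜,
      P[fun ω => d (Xc a' ω) | MeasurableSpace.comap X inferInstance]
        =ᵐ[P] fun ω => d (X ω))
    -- the counterfactual transition matrices
    (Pa : 𝒜 → Matrix 𝒳 𝒳 ℝ)
    (hPa : ∀ (a' : 𝒜) (x x' : 𝒳), Pa a' x x'
      = (P ({ω | Xc a' ω = x'} ∩ {ω | X ω = x})).toReal / (P {ω | X ω = x}).toReal)
    -- and their average
    (M : Matrix 𝒳 𝒳 ℝ)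
    (hM : M = (Fintype.card 𝒜 : ℝ)⁻¹ • ∑ a' : 𝒜, Pa a')
    -- `T` is a recurrent class of `M`
    (T : Finset 𝒳) (hTne : T.Nonempty)
    (hclosed : ∀ x ∈ T, ∀ x', x' ∉ T → M x x' = 0)
    (hirred : ∀ x ∈ T, ∀ x' ∈ T, ∃ N : ℕ, 1 ≤ N ∧ 0 < (M ^ N) x x') :
    -- then `d` is constant on `T`
    ∀ x ∈ T, ∀ x' ∈ T, d x = d x' := by
  classical
  have hm : MeasurableSpace.comap X inferInstance ≤ ‹MeasurableSpace Ω› := hX.comap_le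
  have hmeasX : ∀ x : 𝒳, MeasurableSet {ω | X ω = x} := fun x =>
    hX (measurableSet_singleton x)
  have hmeasXc : ∀ (a' : 𝒜) (x : 𝒳), MeasurableSet {ω | Xc a' ω = x} := fun a' x =>
    hXc a' (measurableSet_singleton x)
  have hp : ∀ x : 𝒳, 0 < (P {ω | X ω = x}).toReal := fun x =>
    ENNReal.toReal_pos (hXpos x).ne' (measure_ne_top P _)
  -- partition identity
  have hpartR : ∀ (a' : 𝒜) (x : 𝒳),
      (P {ω | X ω = x}).toReal
        = ∑ x' : 𝒳, (P ({ω | Xc a' ω = x'} ∩ {ω | X ω = x})).toReal := by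
    intro a' x
    have hU : {ω | X ω = x} = ⋃ x' : 𝒳, ({ω | Xc a' ω = x'} ∩ {ω | X ω = x}) := by
      ext ω; simp
    have hdisj : Pairwise (Function.onFun Disjoint
        fun x' : 𝒳 => ({ω | Xc a' ω = x'} ∩ {ω | X ω = x})) := by
      intro i j hij
      refine Set.disjoint_left.mpr ?_
      rintro ω ⟨h1, _⟩ ⟨h2, _⟩
      exact hij ((h1 : Xc a' ω = i).symm.trans h2)
    have := measure_iUnion (μ := P) hdisj
      (fun x' => (hmeasXc a' x').inter (hmeasX x))
    have hPsum : P {ω | X ω = x} = ∑ x' : 𝒳, P ({ω | Xc a' ω = x'} ∩ {ω | X ω = x}) := by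
      conv_lhs => rw [hU]
      rw [this, tsum_fintype]
    rw [hPsum, ENNReal.toReal_sum]
    intro x' _; exact measure_ne_top P _
  -- measurability / integrability
  have hd_meas : Measurable d := measurable_of_countable d
  have hint : ∀ a' : 𝒜, Integrable (fun ω => d (Xc a' ω)) P := by
    intro a'
    refine ⟨(hd_meas.comp (hXc a')).aestronglyMeasurable,
      HasFiniteIntegral.of_bounded (C := 1) ?_⟩
    filter_upwards with ω
    rw [Real.norm_eq_abs, abs_le]
    exact ⟨by linarith [(hd01 (Xc a' ω)).1], (hd01 (Xc a' ω)).2⟩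
  -- the eigenvector equation for each `Pa a'`
  have heig : ∀ (a' : 𝒜) (x : 𝒳), ∑ x' : 𝒳, Pa a' x x' * d x' = d x := by
    intro a' x
    have hsm : MeasurableSet[MeasurableSpace.comap X inferInstance] {ω | X ω = x} :=
      ⟨{x}, measurableSet_singleton x, rfl⟩
    have h1 : ∫ ω in {ω | X ω = x},
          (P[fun ω => d (Xc a' ω) | MeasurableSpace.comap X inferInstance]) ω ∂P
        = ∫ ω in {ω | X ω = x}, d (Xc a' ω) ∂P :=
      setIntegral_condExp hm (hint a') hsm
    have h2 : ∫ ω in {ω | X ω = x},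
          (P[fun ω => d (Xc a' ω) | MeasurableSpace.comap X inferInstance]) ω ∂P
        = ∫ ω in {ω | X ω = x}, d (X ω) ∂P :=
      integral_congr_ae (ae_restrict_of_ae (hfair a'))
    have h3 : ∫ ω in {ω | X ω = x}, d (X ω) ∂P
        = (P {ω | X ω = x}).toReal * d x := by
      rw [setIntegral_congr_fun (hmeasX x)
        (fun ω hω => by rw [show X ω = x from hω]), setIntegral_const, smul_eq_mul, measureReal_def]
    have h4 : ∫ ω in {ω | X ω = x}, d (Xc a' ω) ∂P
        = ∑ x' : 𝒳, (P ({ω | Xc a' ω = x'} ∩ {ω | X ω = x})).toReal * d x' := by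
      have hdec : ∀ ω, d (Xc a' ω)
          = ∑ x' : 𝒳, Set.indicator {ω | Xc a' ω = x'} (fun _ => d x') ω := by
        intro ω
        rw [Finset.sum_eq_single (Xc a' ω)]
        · exact (Set.indicator_of_mem (by exact rfl) _).symm
        · intro b _ hb
          exact Set.indicator_of_notMem (fun h => hb ((h : Xc a' ω = b).symm)) _
        · simp
      simp_rw [hdec]
      rw [integral_finset_sum]
      · refine Finset.sum_congr rfl fun x' _ => ?_
        rw [setIntegral_indicator (hmeasXc a' x'), setIntegral_const, smul_eq_mul,
          Set.inter_comm, measureReal_def]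
      · intro x' _
        exact (integrable_const (d x')).indicator (hmeasXc a' x') |>.restrict
    have key : ∑ x' : 𝒳, (P ({ω | Xc a' ω = x'} ∩ {ω | X ω = x})).toReal * d x'
        = (P {ω | X ω = x}).toReal * d x := by
      rw [← h4, ← h1, h2, h3]
    have hpx := hp x
    calc ∑ x' : 𝒳, Pa a' x x' * d x'
        = (∑ x' : 𝒳, (P ({ω | Xc a' ω = x'} ∩ {ω | X ω = x})).toReal * d x')
            / (P {ω | X ω = x}).toReal := by
          rw [Finset.sum_div]
          refine Finset.sum_congr rfl fun x' _ => ?_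
          rw [hPa, div_mul_eq_mul_div]
      _ = d x := by
          rw [key, mul_comm, mul_div_assoc, div_self hpx.ne', mul_one]
  -- row sums of each `Pa a'` are 1
  have hrow : ∀ (a' : 𝒜) (x : 𝒳), ∑ x' : 𝒳, Pa a' x x' = 1 := by
    intro a' x
    have hpx := hp x
    simp_rw [hPa a' x]
    rw [← Finset.sum_div, ← hpartR a' x, div_self hpx.ne']
  have hcard : ((Fintype.card 𝒜 : ℝ)) ≠ 0 := by
    exact_mod_cast Fintype.card_pos.ne'
  -- nonnegativity of `M`
  have hMnn : ∀ x x' : 𝒳, 0 ≤ M x x' := by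
    intro x x'
    rw [hM]
    simp only [Matrix.smul_apply, Matrix.sum_apply, smul_eq_mul]
    refine mul_nonneg (by positivity) (Finset.sum_nonneg fun a' _ => ?_)
    rw [hPa]
    exact div_nonneg ENNReal.toReal_nonneg ENNReal.toReal_nonneg
  -- row sums of `M` are 1
  have hMrow : ∀ x : 𝒳, ∑ x' : 𝒳, M x x' = 1 := by
    intro x
    simp only [hM, Matrix.smul_apply, Matrix.sum_apply, smul_eq_mul]
    rw [← Finset.mul_sum, Finset.sum_comm]
    simp_rw [hrow]
    rw [Finset.sum_const, Finset.card_univ, nsmul_eq_mul, mul_one,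
      inv_mul_cancel₀ hcard]
  -- eigenvector equation for `M`
  have hMeig : ∀ x : 𝒳, ∑ x' : 𝒳, M x x' * d x' = d x := by
    intro x
    simp only [hM, Matrix.smul_apply, Matrix.sum_apply, smul_eq_mul]
    have h1 : ∀ x' : 𝒳, (Fintype.card 𝒜 : ℝ)⁻¹ * (∑ a' : 𝒜, Pa a' x x') * d x'
        = (Fintype.card 𝒜 : ℝ)⁻¹ * ∑ a' : 𝒜, Pa a' x x' * d x' := by
      intro x'; rw [mul_assoc, Finset.sum_mul]
    simp_rw [h1, ← Finset.mul_sum]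
    rw [Finset.sum_comm]
    simp_rw [heig]
    rw [Finset.sum_const, Finset.card_univ, nsmul_eq_mul, ← mul_assoc,
      inv_mul_cancel₀ hcard, one_mul]
  -- maximum principle
  obtain ⟨x0, hx0T, hx0max⟩ := Finset.exists_max_image T d hTne
  have step : ∀ x, x ∈ T → d x = d x0 → ∀ x', 0 < M x x' → x' ∈ T ∧ d x' = d x0 := by
    intro x hxT hxm x' hpos
    have hx'T : x' ∈ T := by
      by_contra h
      rw [hclosed x hxT x' h] at hpos
      exact lt_irrefl _ hpos
    refine ⟨hx'T, ?_⟩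
    have hsum0 : ∑ y : 𝒳, M x y * (d x0 - d y) = 0 := by
      have hexp : ∑ y : 𝒳, M x y * (d x0 - d y)
          = (∑ y : 𝒳, M x y) * d x0 - ∑ y : 𝒳, M x y * d y := by
        rw [Finset.sum_mul, ← Finset.sum_sub_distrib]
        exact Finset.sum_congr rfl fun y _ => by ring
      rw [hexp, hMrow x, hMeig x, one_mul, hxm, sub_self]
    have hterm : ∀ y ∈ Finset.univ, (0:ℝ) ≤ M x y * (d x0 - d y) := by
      intro y _
      by_cases hyT : y ∈ T
      · exact mul_nonneg (hMnn x y) (sub_nonneg.mpr (hx0max y hyT))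
      · rw [hclosed x hxT y hyT, zero_mul]
    have hz := (Finset.sum_eq_zero_iff_of_nonneg hterm).mp hsum0 x' (Finset.mem_univ _)
    rcases mul_eq_zero.mp hz with h | h
    · exact absurd h (ne_of_gt hpos)
    · linarith
  -- powers of `M` are nonnegative
  have hpow_nn : ∀ (N : ℕ) (x x' : 𝒳), 0 ≤ (M ^ N) x x' := by
    intro N
    induction N with
    | zero =>
      intro x x'
      rw [pow_zero]
      by_cases h : x = x' <;> simp [Matrix.one_apply, h]
    | succ n ih =>
      intro x x'
      rw [pow_succ', Matrix.mul_apply]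
      exact Finset.sum_nonneg fun y _ => mul_nonneg (hMnn x y) (ih y x')
  -- propagation along positive entries of powers
  have main : ∀ (N : ℕ) (x : 𝒳), x ∈ T → d x = d x0 →
      ∀ x', 0 < (M ^ N) x x' → x' ∈ T ∧ d x' = d x0 := by
    intro N
    induction N with
    | zero =>
      intro x hxT hxm x' hpos
      rw [pow_zero] at hpos
      have hxx : x = x' := by
        by_contra h
        rw [Matrix.one_apply_ne h] at hpos
        exact lt_irrefl _ hpos
      exact hxx ▸ ⟨hxT, hxm⟩
    | succ n ih =>
      intro x hxT hxm x' hpos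
      rw [pow_succ', Matrix.mul_apply] at hpos
      have hex : ∃ y : 𝒳, 0 < M x y * (M ^ n) y x' := by
        by_contra h
        push_neg at h
        have : ∑ y : 𝒳, M x y * (M ^ n) y x' ≤ 0 :=
          Finset.sum_nonpos fun y _ => h y
        linarith
      obtain ⟨y, hy⟩ := hex
      have hMxy : 0 < M x y := by
        rcases lt_or_eq_of_le (hMnn x y) with h | h
        · exact h
        · rw [← h, zero_mul] at hy; exact absurd hy (lt_irrefl 0)
      have hMn : 0 < (M ^ n) y x' := by
        rcases lt_or_eq_of_le (hpow_nn n y x') with h | h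
        · exact h
        · rw [← h, mul_zero] at hy; exact absurd hy (lt_irrefl 0)
      obtain ⟨hyT, hym⟩ := step x hxT hxm y hMxy
      exact ih y hyT hym x' hMn
  intro x hxT x' hx'T
  obtain ⟨N, _, hN⟩ := hirred x0 hx0T x hxT
  obtain ⟨N', _, hN'⟩ := hirred x0 hx0T x' hx'T
  rw [(main N x0 hx0T rfl x hN).2, (main N' x0 hx0T rfl x' hN').2]
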